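/- Let G be a connected P5-free graph with an efficient dominating set D = {d_1, ..., d_k}, k ≥ 2, with R_i = N(d_i) \ D. Then for all i ≠ j, there is at least one edge between R_i and R_j. -/

import Mathlib

open SimpleGraph

/-- `D` is an efficient dominating set: every vertex is dominated by exactly one vertex of `D`
(a vertex dominates itself and its neighbors). -/
def SimpleGraph.IsEDS {V : Type*} (G : SimpleGraph V) (D : Set V) : Prop :=
  ∀ v : V, ∃! d, d ∈ D ∧ (d = v ∨ G.Adj d v)

/-- The closed neighborhood of a vertex. -/
def SimpleGraph.closedNbhd {V : Type*} (G : SimpleGraph V) (v : V) : Set V :=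
  insert v (G.neighborSet v)

/-- A homogeneous set: at least two vertices, not all of them, and every outside vertex is
adjacent to all or to none of them. -/
def SimpleGraph.IsHomogeneousSet {V : Type*} (G : SimpleGraph V) (H : Set V) : Prop :=
  2 ≤ H.ncard ∧ H ≠ Set.univ ∧
    ∀ v ∉ H, (∀ h ∈ H, G.Adj v h) ∨ (∀ h ∈ H, ¬ G.Adj v h)

/-- A prime graph: at least two vertices and no homogeneous set. -/
def SimpleGraph.IsPrime {V : Type*} [Fintype V] (G : SimpleGraph V) : Prop :=
  2 ≤ Fintype.card V ∧ ∀ H : Set V, ¬ G.IsHomogeneousSet H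

/-- `G` is `P₅`-free: no induced subgraph isomorphic to the path on five vertices. -/
def SimpleGraph.P5Free {V : Type*} (G : SimpleGraph V) : Prop :=
  ¬ Nonempty (SimpleGraph.pathGraph 5 ↪g G)

/-- The graph `2P₂`: the disjoint union of two edges. -/
def twoP2 : SimpleGraph (Fin 4) :=
  SimpleGraph.fromRel (fun a b => (a = 0 ∧ b = 1) ∨ (a = 2 ∧ b = 3))

/-- `G` is `2P₂`-free: no induced subgraph isomorphic to `2P₂`. -/
def SimpleGraph.TwoP2Free {V : Type*} (G : SimpleGraph V) : Prop :=
  ¬ Nonempty (twoP2 ↪g G)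

/-- A thin spider: a split graph with a clique side `C` and independent side `I`,
with a perfect matching between `C` and `I`. -/
def SimpleGraph.IsThinSpider {V : Type*} (G : SimpleGraph V) : Prop :=
  ∃ C I : Set V, Disjoint C I ∧ C ∪ I = Set.univ ∧ G.IsClique C ∧
    (∀ a ∈ I, ∀ b ∈ I, a ≠ b → ¬ G.Adj a b) ∧
    (∀ c ∈ C, ∃! i, i ∈ I ∧ G.Adj c i) ∧
    (∀ i ∈ I, ∃! c, c ∈ C ∧ G.Adj i c)

lemma aux_exists_walk_segment {V : Type*} {G : SimpleGraph V} :
    ∀ {u v : V} (p : G.Walk u v) (i j : ℕ), i ≤ j → j ≤ p.length →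
      ∃ q : G.Walk (p.getVert i) (p.getVert j), q.length = j - i := by
  intro u v p
  induction p with
  | nil =>
    intro i j hij hj
    simp only [SimpleGraph.Walk.length_nil, Nat.le_zero] at hj
    subst hj
    interval_cases i
    exact ⟨SimpleGraph.Walk.nil, rfl⟩
  | @cons a b c h p ih =>
    intro i j hij hj
    match i, j with
    | 0, 0 => exact ⟨SimpleGraph.Walk.nil.copy (SimpleGraph.Walk.getVert_zero _).symm
        (SimpleGraph.Walk.getVert_zero _).symm, by simp⟩
    | 0, (m+1) =>
      obtain ⟨q, hq⟩ := ih 0 m (Nat.zero_le _) (by simpa using hj)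
      refine ⟨((q.copy (SimpleGraph.Walk.getVert_zero p) rfl).cons h).copy
        (SimpleGraph.Walk.getVert_zero _).symm
        (SimpleGraph.Walk.getVert_cons_succ p h).symm, ?_⟩
      simp only [SimpleGraph.Walk.length_copy, SimpleGraph.Walk.length_cons]
      omega
    | (k+1), (m+1) =>
      obtain ⟨q, hq⟩ := ih k m (Nat.succ_le_succ_iff.mp hij) (by simpa using hj)
      exact ⟨q.copy (SimpleGraph.Walk.getVert_cons_succ p h).symm
        (SimpleGraph.Walk.getVert_cons_succ p h).symm, by simpa using hq⟩

lemma aux_dist_getVert {V : Type*} {G : SimpleGraph V} (hconn : G.Connected)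
    {u v : V} (p : G.Walk u v) (hp : p.length = G.dist u v)
    {i j : ℕ} (hij : i ≤ j) (hj : j ≤ p.length) :
    G.dist (p.getVert i) (p.getVert j) = j - i := by
  obtain ⟨q, hq⟩ := aux_exists_walk_segment p i j hij hj
  have hle : G.dist (p.getVert i) (p.getVert j) ≤ j - i := hq ▸ SimpleGraph.dist_le q
  refine le_antisymm hle ?_
  obtain ⟨q1, hq1⟩ := aux_exists_walk_segment p 0 i (Nat.zero_le _) (hij.trans hj)
  obtain ⟨q2, hq2⟩ := aux_exists_walk_segment p j p.length hj le_rfl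
  have h1 : G.dist u (p.getVert i) ≤ i := by
    have := SimpleGraph.dist_le q1
    rwa [hq1, Nat.sub_zero, SimpleGraph.Walk.getVert_zero] at this
  have h2 : G.dist (p.getVert j) v ≤ p.length - j := by
    have := SimpleGraph.dist_le q2
    rwa [hq2, SimpleGraph.Walk.getVert_length] at this
  have htri : G.dist u v ≤ G.dist u (p.getVert i) +
      (G.dist (p.getVert i) (p.getVert j) + G.dist (p.getVert j) v) :=
    le_trans (hconn.dist_triangle) (by
      exact Nat.add_le_add_left (hconn.dist_triangle) _)
  omega

theorem stmt_4 {V : Type*} (G : SimpleGraph V) (hconn : G.Connected) (hP5 : G.P5Free)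
    (D : Set V) (hD : G.IsEDS D) (hcard : 2 ≤ D.ncard)
    (d₁ d₂ : V) (hd₁ : d₁ ∈ D) (hd₂ : d₂ ∈ D) (hne : d₁ ≠ d₂) :
    ∃ x ∈ G.neighborSet d₁ \ D, ∃ y ∈ G.neighborSet d₂ \ D, G.Adj x y := by
  classical
  -- d₁ and d₂ are not adjacent
  have hnadj : ¬ G.Adj d₁ d₂ := by
    intro hadj
    obtain ⟨d, _, huniq⟩ := hD d₂
    exact hne ((huniq d₁ ⟨hd₁, Or.inr hadj⟩).trans (huniq d₂ ⟨hd₂, Or.inl rfl⟩).symm)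
  -- no common neighbor
  have hnocommon : ∀ w, ¬ (G.Adj d₁ w ∧ G.Adj d₂ w) := by
    rintro w ⟨h1, h2⟩
    obtain ⟨d, _, huniq⟩ := hD w
    exact hne ((huniq d₁ ⟨hd₁, Or.inr h1⟩).trans (huniq d₂ ⟨hd₂, Or.inr h2⟩).symm)
  -- distance is at least 3
  have hd3 : 3 ≤ G.dist d₁ d₂ := by
    by_contra hlt
    push_neg at hlt
    interval_cases h : G.dist d₁ d₂
    · exact hne (hconn.dist_eq_zero_iff.mp h)
    · exact hnadj (SimpleGraph.dist_eq_one_iff_adj.mp h)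
    · obtain ⟨p, hp⟩ := hconn.exists_walk_length_eq_dist d₁ d₂
      rw [h] at hp
      have ha1 : G.Adj d₁ (p.getVert 1) := by
        have := p.adj_getVert_succ (i := 0) (by omega)
        rwa [SimpleGraph.Walk.getVert_zero] at this
      have ha2 : G.Adj (p.getVert 1) (p.getVert 2) := p.adj_getVert_succ (by omega)
      rw [show (2 : ℕ) = p.length by omega, SimpleGraph.Walk.getVert_length] at ha2
      exact hnocommon (p.getVert 1) ⟨ha1, ha2.symm⟩
  obtain ⟨p, hp⟩ := hconn.exists_walk_length_eq_dist d₁ d₂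
  -- distance is at most 3, else P5
  have hd4 : G.dist d₁ d₂ < 4 := by
    by_contra hge
    push_neg at hge
    have hlen : 4 ≤ p.length := by omega
    refine hP5 ⟨⟨⟨fun i => p.getVert i, ?_⟩, ?_⟩⟩
    · intro a b hab
      have hab' : p.getVert a.val = p.getVert b.val := hab
      rcases Nat.le_total a.val b.val with hle | hle
      · have := aux_dist_getVert hconn p hp hle (by omega)
        rw [hab', SimpleGraph.dist_self] at this
        exact Fin.ext (by omega)
      · have := aux_dist_getVert hconn p hp hle (by omega)
        rw [hab', SimpleGraph.dist_self] at this
        exact Fin.ext (by omega)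
    · intro a b
      simp only [Function.Embedding.coeFn_mk, SimpleGraph.pathGraph_adj]
      constructor
      · intro hadj
        by_contra hc
        push_neg at hc
        rcases Nat.le_total a.val b.val with hle | hle
        · have hd : G.dist (p.getVert a.val) (p.getVert b.val) = b.val - a.val :=
            aux_dist_getVert hconn p hp hle (by omega)
          have : G.dist (p.getVert a.val) (p.getVert b.val) ≤ 1 :=
            le_of_eq (SimpleGraph.dist_eq_one_iff_adj.mpr hadj)
          have hne' : a.val ≠ b.val := fun h => by
            have hab : a = b := Fin.ext h
            subst hab
            exact G.irrefl hadj
          omega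
        · have hd : G.dist (p.getVert b.val) (p.getVert a.val) = a.val - b.val :=
            aux_dist_getVert hconn p hp hle (by omega)
          have : G.dist (p.getVert b.val) (p.getVert a.val) ≤ 1 :=
            le_of_eq (SimpleGraph.dist_eq_one_iff_adj.mpr hadj.symm)
          have hne' : a.val ≠ b.val := fun h => by
            have hab : a = b := Fin.ext h
            subst hab
            exact G.irrefl hadj
          omega
      · rintro (hab | hab)
        · have := p.adj_getVert_succ (i := a.val) (by omega)
          rwa [hab] at this
        · have := p.adj_getVert_succ (i := b.val) (by omega)
          rw [hab] at this
          exact this.symm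
  have hdist : G.dist d₁ d₂ = 3 := by omega
  rw [hdist] at hp
  set x := p.getVert 1 with hx
  set y := p.getVert 2 with hy
  have ha1 : G.Adj d₁ x := by
    have := p.adj_getVert_succ (i := 0) (by omega)
    rwa [SimpleGraph.Walk.getVert_zero] at this
  have ha2 : G.Adj x y := p.adj_getVert_succ (by omega)
  have ha3 : G.Adj y d₂ := by
    have := p.adj_getVert_succ (i := 2) (by omega)
    rwa [show (2 : ℕ) + 1 = p.length by omega, SimpleGraph.Walk.getVert_length] at this
  have hxD : x ∉ D := by
    intro hxD
    obtain ⟨d, _, huniq⟩ := hD x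
    have := (huniq d₁ ⟨hd₁, Or.inr ha1⟩).trans (huniq x ⟨hxD, Or.inl rfl⟩).symm
    exact G.irrefl (this ▸ ha1)
  have hyD : y ∉ D := by
    intro hyD
    obtain ⟨d, _, huniq⟩ := hD y
    have := (huniq d₂ ⟨hd₂, Or.inr ha3.symm⟩).trans (huniq y ⟨hyD, Or.inl rfl⟩).symm
    exact G.irrefl (this ▸ ha3)
  exact ⟨x, ⟨ha1, hxD⟩, y, ⟨ha3.symm, hyD⟩, ha2⟩
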